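/- Let d ≥ 3, let P be the polynomial on ℝ^d given by P(x₁,…,x_d) = x₁² − x₂² − ⋯ − x_d², and let N = (1/√2)·(1,1,0,…,0) ∈ S^{d−1}. Then there exists c ∈ ℂ \ {0} such that the polynomial η ↦ c·(η₁ − η₂) belongs to L_N(P); in particular L_N(P) contains a non-constant element. -/

import Mathlib

open MvPolynomial Filter Topology RealInnerProductSpace

noncomputable section

/-- Evaluation of a complex-coefficient polynomial at a real point of `ℝ^d`. -/
def evalP {d : ℕ} (P : MvPolynomial (Fin d) ℂ) (x : EuclideanSpace ℝ (Fin d)) : ℂ :=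
  MvPolynomial.eval (fun i => (x i : ℂ)) P

/-- The shifted polynomial `P_ξ(η) = P(η + ξ)`. -/
def shiftP {d : ℕ} (P : MvPolynomial (Fin d) ℂ) (ξ : EuclideanSpace ℝ (Fin d)) :
    MvPolynomial (Fin d) ℂ :=
  MvPolynomial.aeval (fun i => MvPolynomial.X i + MvPolynomial.C ((ξ i : ℂ))) P

/-- `Q̃(0) = sqrt (∑_α |Q^{(α)}(0)|²)`, using `Q^{(α)}(0) = α! ⬝ coeff α Q`. -/
def tildeZero {d : ℕ} (Q : MvPolynomial (Fin d) ℂ) : ℝ :=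
  Real.sqrt (∑ α ∈ Q.support,
    ((∏ i, Nat.factorial (α i) : ℝ) * ‖MvPolynomial.coeff α Q‖) ^ 2)

/-- The normalized shifted polynomial `P_ξ / P̃_ξ(0)`. -/
def normShift {d : ℕ} (P : MvPolynomial (Fin d) ℂ) (ξ : EuclideanSpace ℝ (Fin d)) :
    MvPolynomial (Fin d) ℂ :=
  ((tildeZero (shiftP P ξ) : ℂ))⁻¹ • shiftP P ξ

/-- `L(P)`: localizations of `P` at infinity (limits taken in the norm `Q ↦ Q̃(0)`). -/
def Lset {d : ℕ} (P : MvPolynomial (Fin d) ℂ) : Set (MvPolynomial (Fin d) ℂ) :=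
  {Q | ∃ ξ : ℕ → EuclideanSpace ℝ (Fin d),
    Tendsto (fun n => ‖ξ n‖) atTop atTop ∧
    Tendsto (fun n => tildeZero (normShift P (ξ n) - Q)) atTop (nhds 0)}

/-- `L_N(P)`: localizations of `P` at infinity in direction `N`. -/
def LNset {d : ℕ} (P : MvPolynomial (Fin d) ℂ) (N : EuclideanSpace ℝ (Fin d)) :
    Set (MvPolynomial (Fin d) ℂ) :=
  {Q | ∃ ξ : ℕ → EuclideanSpace ℝ (Fin d),
    Tendsto (fun n => ‖ξ n‖) atTop atTop ∧
    Tendsto (fun n => ‖ξ n‖⁻¹ • ξ n) atTop (nhds N) ∧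
    Tendsto (fun n => tildeZero (normShift P (ξ n) - Q)) atTop (nhds 0)}

/-- `P̃_V(ξ,t) = sup {|P(ξ+η)| : η ∈ V, |η| ≤ t}`. -/
def tildeSupV {d : ℕ} (P : MvPolynomial (Fin d) ℂ)
    (V : Submodule ℝ (EuclideanSpace ℝ (Fin d)))
    (ξ : EuclideanSpace ℝ (Fin d)) (t : ℝ) : ℝ :=
  sSup ((fun η => ‖evalP P (ξ + η)‖) '' {η | η ∈ V ∧ ‖η‖ ≤ t})

/-- `P̃(ξ,t) = P̃_{ℝ^d}(ξ,t)`. -/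
def tildeSup {d : ℕ} (P : MvPolynomial (Fin d) ℂ)
    (ξ : EuclideanSpace ℝ (Fin d)) (t : ℝ) : ℝ :=
  tildeSupV P ⊤ ξ t

/-- The filter `|ξ| → ∞` on `ℝ^d`. -/
def toInfty (d : ℕ) : Filter (EuclideanSpace ℝ (Fin d)) :=
  Filter.comap (fun ξ => ‖ξ‖) Filter.atTop

/-- `σ_P(V) = inf_{t ≥ 1} liminf_{|ξ|→∞} P̃_V(ξ,t) / P̃(ξ,t)`. -/
def sigmaP {d : ℕ} (P : MvPolynomial (Fin d) ℂ)
    (V : Submodule ℝ (EuclideanSpace ℝ (Fin d))) : ℝ :=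
  sInf {r | ∃ t : ℝ, 1 ≤ t ∧
    r = Filter.liminf (fun ξ => tildeSupV P V ξ t / tildeSup P ξ t) (toInfty d)}

/-- `σ_P(y) = σ_P(span {y})`. -/
def sigmaPt {d : ℕ} (P : MvPolynomial (Fin d) ℂ) (y : EuclideanSpace ℝ (Fin d)) : ℝ :=
  sigmaP P (Submodule.span ℝ {y})

/-- The reflected polynomial `P̌(x) = P(-x)`. -/
def checkP {d : ℕ} (P : MvPolynomial (Fin d) ℂ) : MvPolynomial (Fin d) ℂ :=
  MvPolynomial.aeval (fun i => -MvPolynomial.X i) P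

/-- `Λ(Q) = {η : Q(ξ + tη) = Q(ξ) for all ξ, t}` as a set. -/
def LambdaSet {d : ℕ} (Q : MvPolynomial (Fin d) ℂ) : Set (EuclideanSpace ℝ (Fin d)) :=
  {η | ∀ (ξ : EuclideanSpace ℝ (Fin d)) (t : ℝ), evalP Q (ξ + t • η) = evalP Q ξ}

/-- The dual cone `Γ° = {ξ : ⟨y,ξ⟩ ≥ 0 for all y ∈ Γ}`. -/
def dualCone {d : ℕ} (Γ : Set (EuclideanSpace ℝ (Fin d))) : Set (EuclideanSpace ℝ (Fin d)) :=
  {ξ | ∀ y ∈ Γ, 0 ≤ ⟪y, ξ⟫}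


section Aux
variable {d : ℕ}


lemma tildeZero_eq_sum (R : MvPolynomial (Fin d) ℂ) (S : Finset (Fin d →₀ ℕ)) (h : R.support ⊆ S) :
    tildeZero R = Real.sqrt (∑ α ∈ S,
      ((∏ i, Nat.factorial (α i) : ℝ) * ‖MvPolynomial.coeff α R‖) ^ 2) := by
  unfold tildeZero
  rw [Finset.sum_subset h]
  intro α _ hα
  rw [MvPolynomial.notMem_support_iff.mp hα]
  simp

lemma prod_fact_single_two (j : Fin d) :
    (∏ i, (Nat.factorial ((Finsupp.single j 2) i) : ℝ)) = 2 := by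
  have h : ∀ i : Fin d, (Nat.factorial ((Finsupp.single j 2) i) : ℝ) = if i = j then 2 else 1 := by
    intro i
    rcases eq_or_ne i j with h | h
    · simp [Finsupp.single_apply, h]
    · simp [Finsupp.single_apply, (Ne.symm h), h]
  simp only [h]
  simp

lemma prod_fact_single_one (j : Fin d) :
    (∏ i, (Nat.factorial ((Finsupp.single j 1) i) : ℝ)) = 1 := by
  have h : ∀ i : Fin d, (Nat.factorial ((Finsupp.single j 1) i) : ℝ) = 1 := by
    intro i
    rcases eq_or_ne i j with h | h
    · simp [Finsupp.single_apply, h]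
    · simp [Finsupp.single_apply, Ne.symm h]
  simp [h]

lemma key (d : ℕ) (e0 e1 : Fin d) (h0 : (e0:ℕ) = 0) (h1 : (e1:ℕ) = 1) (u v : ℝ) :
    tildeZero ((u:ℂ) • (X e0 ^ 2 -
        ∑ i ∈ Finset.univ.filter (fun i : Fin d => (i : ℕ) ≠ 0), X i ^ 2)
      + (v:ℂ) • (X e0 - X e1)) = Real.sqrt (4*d*u^2 + 2*v^2) := by
  classical
  set F := Finset.univ.filter (fun i : Fin d => (i : ℕ) ≠ 0) with hF
  set Pp : MvPolynomial (Fin d) ℂ := X e0 ^ 2 - ∑ i ∈ F, X i ^ 2 with hPp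
  set Ll : MvPolynomial (Fin d) ℂ := X e0 - X e1 with hLl
  set R : MvPolynomial (Fin d) ℂ := (u:ℂ) • Pp + (v:ℂ) • Ll with hR
  have hne : e0 ≠ e1 := by intro h; rw [h, h1] at h0; omega
  set A : Fin d →₀ ℕ := Finsupp.single e0 1 with hA
  set B : Fin d →₀ ℕ := Finsupp.single e1 1 with hB
  set T : Finset (Fin d →₀ ℕ) := Finset.univ.image (fun i : Fin d => Finsupp.single i 2) with hT
  set S : Finset (Fin d →₀ ℕ) := insert A (insert B T) with hS
  have hmemF : ∀ j : Fin d, j ∈ F ↔ j ≠ e0 := by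
    intro j
    simp only [hF, Finset.mem_filter, Finset.mem_univ, true_and]
    constructor
    · intro h he; rw [he, h0] at h; exact h rfl
    · intro h hv; exact h (Fin.ext (by omega))
  have hsub : R.support ⊆ S := by
    have hP : Pp.support ⊆ T := by
      refine (MvPolynomial.support_sub _ _ _).trans ?_
      apply Finset.union_subset
      · rw [MvPolynomial.support_X_pow]
        intro x hx
        simp only [Finset.mem_singleton] at hx
        subst hx
        exact Finset.mem_image_of_mem _ (Finset.mem_univ e0)
      · refine MvPolynomial.support_sum.trans ?_
        intro x hx
        simp only [Finset.mem_biUnion, MvPolynomial.support_X_pow,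
          Finset.mem_singleton] at hx
        obtain ⟨i, _, rfl⟩ := hx
        exact Finset.mem_image_of_mem _ (Finset.mem_univ i)
    have hL : Ll.support ⊆ {A, B} := by
      refine (MvPolynomial.support_sub _ _ _).trans ?_
      rw [MvPolynomial.support_X, MvPolynomial.support_X]
      intro x hx
      simp only [Finset.mem_union, Finset.mem_singleton] at hx
      rcases hx with rfl | rfl <;> simp [hS, hA, hB]
    refine (MvPolynomial.support_add).trans ?_
    apply Finset.union_subset
    · refine MvPolynomial.support_smul.trans (hP.trans ?_)
      intro x hx
      simp [hS, Finset.mem_insert, hx]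
    · refine MvPolynomial.support_smul.trans (hL.trans ?_)
      intro x hx
      simp only [Finset.mem_insert, Finset.mem_singleton] at hx
      rcases hx with rfl | rfl <;> simp [hS]
  have cA : MvPolynomial.coeff A R = v := by
    simp [hR, hPp, hLl, hA, MvPolynomial.coeff_add, MvPolynomial.coeff_smul,
      MvPolynomial.coeff_sub, MvPolynomial.coeff_sum, MvPolynomial.coeff_X_pow,
      MvPolynomial.coeff_X', Finsupp.single_eq_single_iff, hne, hne.symm, smul_eq_mul]
  have cB : MvPolynomial.coeff B R = -v := by
    simp [hR, hPp, hLl, hB, MvPolynomial.coeff_add, MvPolynomial.coeff_smul,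
      MvPolynomial.coeff_sub, MvPolynomial.coeff_sum, MvPolynomial.coeff_X_pow,
      MvPolynomial.coeff_X', Finsupp.single_eq_single_iff, hne, hne.symm, smul_eq_mul]
  have cT : ∀ j : Fin d, ‖MvPolynomial.coeff (Finsupp.single j 2) R‖ = |u| := by
    intro j
    have hsum : ∑ i ∈ F, MvPolynomial.coeff (Finsupp.single j 2) (X i ^ 2 : MvPolynomial (Fin d) ℂ)
        = if j ∈ F then 1 else 0 := by
      rw [← Finset.sum_ite_eq' F j (fun _ => (1:ℂ))]
      apply Finset.sum_congr rfl
      intro i _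
      rw [MvPolynomial.coeff_X_pow]
      simp [Finsupp.single_eq_single_iff]
    have hc2 : MvPolynomial.coeff (Finsupp.single j 2) Ll = 0 := by
      simp [hLl, MvPolynomial.coeff_X', Finsupp.single_eq_single_iff]
    rw [hR, MvPolynomial.coeff_add, MvPolynomial.coeff_smul, MvPolynomial.coeff_smul, hc2,
      smul_zero, add_zero, hPp, MvPolynomial.coeff_sub, MvPolynomial.coeff_sum, hsum,
      MvPolynomial.coeff_X_pow]
    rcases eq_or_ne j e0 with rfl | hj
    · rw [if_pos rfl, if_neg (by simpa using (hmemF j).not.mpr (by simp))]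
      simp
    · rw [if_neg (by simp [Finsupp.single_eq_single_iff, Ne.symm hj]), if_pos ((hmemF j).mpr hj)]
      simp
  have hBT : B ∉ T := by
    simp only [hT, hB, Finset.mem_image, Finset.mem_univ, true_and, not_exists]
    intro i h
    rw [Finsupp.single_eq_single_iff] at h
    omega
  have hAS : A ∉ insert B T := by
    simp only [Finset.mem_insert, hT, hA, hB, Finset.mem_image, Finset.mem_univ, true_and,
      not_or, not_exists]
    constructor
    · intro h; rw [Finsupp.single_eq_single_iff] at h
      rcases h with ⟨h, _⟩ | ⟨h, _⟩
      · exact hne h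
      · omega
    · intro i h; rw [Finsupp.single_eq_single_iff] at h; omega
  have hinj : Set.InjOn (fun i : Fin d => Finsupp.single i 2) (Finset.univ : Finset (Fin d)) := by
    intro i _ j _ h
    exact Finsupp.single_left_injective (by norm_num) h
  rw [tildeZero_eq_sum R S hsub, hS, Finset.sum_insert hAS, Finset.sum_insert hBT,
    Finset.sum_image hinj]
  have hTsum : ∑ j : Fin d,
      ((∏ i, (Nat.factorial ((Finsupp.single j 2) i) : ℝ)) *
        ‖MvPolynomial.coeff (Finsupp.single j 2) R‖) ^ 2 = d * (4 * u^2) := by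
    have : ∀ j : Fin d,
        ((∏ i, (Nat.factorial ((Finsupp.single j 2) i) : ℝ)) *
          ‖MvPolynomial.coeff (Finsupp.single j 2) R‖) ^ 2 = 4 * u^2 := by
      intro j
      rw [prod_fact_single_two, cT]
      rw [mul_pow, sq_abs]
      norm_num
    rw [Finset.sum_congr rfl (fun j _ => this j)]
    simp [mul_comm]
  rw [hTsum, prod_fact_single_one, prod_fact_single_one, cA, cB]
  congr 1
  have h1' : ‖(-(v:ℂ))‖ = |v| := by
    rw [norm_neg, Complex.norm_real, Real.norm_eq_abs]
  rw [h1', Complex.norm_real, Real.norm_eq_abs]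
  have hv : |v| ^ 2 = v ^ 2 := sq_abs v
  nlinarith [hv]


lemma shift_eq (d : ℕ) (e0 e1 : Fin d) (h0 : (e0:ℕ) = 0) (h1 : (e1:ℕ) = 1) (n : ℕ) :
    shiftP (X e0 ^ 2 - ∑ i ∈ Finset.univ.filter (fun i : Fin d => (i : ℕ) ≠ 0), X i ^ 2)
        ((n:ℝ) • (EuclideanSpace.single e0 1 + EuclideanSpace.single e1 1))
      = (X e0 ^ 2 - ∑ i ∈ Finset.univ.filter (fun i : Fin d => (i : ℕ) ≠ 0), X i ^ 2)
        + (((2*n : ℝ)) : ℂ) • (X e0 - X e1) := by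
  classical
  have hne : e0 ≠ e1 := by intro h; rw [h, h1] at h0; omega
  set F := Finset.univ.filter (fun i : Fin d => (i : ℕ) ≠ 0) with hF
  set ξ : EuclideanSpace ℝ (Fin d) :=
    (n:ℝ) • (EuclideanSpace.single e0 1 + EuclideanSpace.single e1 1) with hξ
  have hξ0 : ξ e0 = (n:ℝ) := by
    simp [hξ, EuclideanSpace.single_apply, hne, PiLp.smul_apply, PiLp.add_apply]
  have hξ1 : ξ e1 = (n:ℝ) := by
    simp [hξ, EuclideanSpace.single_apply, hne.symm, PiLp.smul_apply, PiLp.add_apply]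
  have hξo : ∀ i : Fin d, i ≠ e0 → i ≠ e1 → ξ i = 0 := by
    intro i hi0 hi1
    simp [hξ, EuclideanSpace.single_apply, hi0, hi1, PiLp.smul_apply, PiLp.add_apply]
  have he1F : e1 ∈ F := by
    simp [hF, h1]
  simp only [shiftP, map_sub, map_pow, map_sum, MvPolynomial.aeval_X]
  rw [← Finset.add_sum_erase F _ he1F, ← Finset.add_sum_erase F (fun i => (X i:MvPolynomial (Fin d) ℂ)^2) he1F]
  have hrest : ∑ i ∈ F.erase e1, (X i + C ((ξ i : ℝ) : ℂ))^2
      = ∑ i ∈ F.erase e1, (X i : MvPolynomial (Fin d) ℂ)^2 := by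
    apply Finset.sum_congr rfl
    intro i hi
    rw [Finset.mem_erase, hF, Finset.mem_filter] at hi
    have hi0 : i ≠ e0 := by
      intro h; rw [h, h0] at hi; exact hi.2.2 rfl
    rw [hξo i hi0 hi.1]
    norm_num
  rw [hrest, hξ0, hξ1]
  have hC : (C (((2*(n:ℝ)) : ℝ) : ℂ) : MvPolynomial (Fin d) ℂ)
      = 2 * C (((n:ℝ)) : ℂ) := by
    push_cast
    rw [map_mul, map_ofNat]
  rw [MvPolynomial.smul_eq_C_mul, hC]
  ring

end Aux

/-- For `d ≥ 3`, `P(x) = x₁² - x₂² - ⋯ - x_d²` and `N = (1/√2)(1,1,0,…,0)`, some nonzero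
multiple of `η ↦ η₁ - η₂` belongs to `L_N(P)`; in particular `L_N(P)` contains a
non-constant element. -/
theorem stmt10 (d : ℕ) (hd : 3 ≤ d) :
    let P : MvPolynomial (Fin d) ℂ :=
      MvPolynomial.X (⟨0, by omega⟩ : Fin d) ^ 2 -
        ∑ i ∈ Finset.univ.filter (fun i : Fin d => (i : ℕ) ≠ 0), MvPolynomial.X i ^ 2
    let N : EuclideanSpace ℝ (Fin d) := (Real.sqrt 2)⁻¹ •
      (EuclideanSpace.single (⟨0, by omega⟩ : Fin d) 1 +
        EuclideanSpace.single (⟨1, by omega⟩ : Fin d) 1)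
    (∃ c : ℂ, c ≠ 0 ∧
        MvPolynomial.C c * (MvPolynomial.X (⟨0, by omega⟩ : Fin d) -
          MvPolynomial.X (⟨1, by omega⟩ : Fin d)) ∈ LNset P N) ∧
      ∃ Q ∈ LNset P N, ∀ a : ℂ, Q ≠ MvPolynomial.C a := by
  classical
  intro P N
  set e0 : Fin d := ⟨0, by omega⟩ with he0
  set e1 : Fin d := ⟨1, by omega⟩ with he1
  have h0 : (e0 : ℕ) = 0 := rfl
  have h1 : (e1 : ℕ) = 1 := rfl
  have hne : e0 ≠ e1 := by intro h; rw [h, h1] at h0; omega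
  set c : ℝ := (Real.sqrt 2)⁻¹ with hc
  have hcpos : 0 < c := by rw [hc]; positivity
  have hc0 : c ≠ 0 := hcpos.ne'
  set L : MvPolynomial (Fin d) ℂ := MvPolynomial.X e0 - MvPolynomial.X e1 with hL
  set Q : MvPolynomial (Fin d) ℂ := MvPolynomial.C (c : ℂ) * L with hQ
  set w : EuclideanSpace ℝ (Fin d) :=
    EuclideanSpace.single e0 1 + EuclideanSpace.single e1 1 with hw
  set ξ : ℕ → EuclideanSpace ℝ (Fin d) := fun n => (n : ℝ) • w with hξ
  have hwnorm : ‖w‖ = Real.sqrt 2 := by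
    rw [EuclideanSpace.norm_eq]
    congr 1
    have key' : ∀ i : Fin d, ‖w i‖ ^ 2 =
        (if i = e0 then (1:ℝ) else 0) + (if i = e1 then (1:ℝ) else 0) := by
      intro i
      have hwi : w i = (if i = e0 then (1:ℝ) else 0) + (if i = e1 then (1:ℝ) else 0) := by
        simp [hw, EuclideanSpace.single_apply, PiLp.add_apply]
      rw [hwi]
      rcases eq_or_ne i e0 with rfl | hi0
      · rw [if_pos rfl, if_neg hne]; norm_num
      · rcases eq_or_ne i e1 with rfl | hi1
        · rw [if_neg hi0, if_pos rfl]; norm_num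
        · rw [if_neg hi0, if_neg hi1]; norm_num
    rw [Finset.sum_congr rfl (fun i _ => key' i), Finset.sum_add_distrib,
      Finset.sum_ite_eq' Finset.univ e0 (fun _ => (1:ℝ)),
      Finset.sum_ite_eq' Finset.univ e1 (fun _ => (1:ℝ))]
    norm_num
  have hξnorm : ∀ n : ℕ, ‖ξ n‖ = n * Real.sqrt 2 := by
    intro n
    rw [hξ]
    simp only [norm_smul, hwnorm, Real.norm_natCast]
  have hsqrt2pos : (0:ℝ) < Real.sqrt 2 := by positivity
  have htend1 : Tendsto (fun n => ‖ξ n‖) atTop atTop := by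
    simp only [hξnorm]
    exact (tendsto_natCast_atTop_atTop).atTop_mul_const hsqrt2pos
  have htend2 : Tendsto (fun n => ‖ξ n‖⁻¹ • ξ n) atTop (nhds N) := by
    apply Tendsto.congr' _ (tendsto_const_nhds (x := N))
    filter_upwards [Filter.eventually_ge_atTop 1] with n hn
    have hn0 : (n:ℝ) ≠ 0 := by positivity
    rw [hξnorm, hξ]
    simp only [smul_smul]
    have hmul : ((n:ℝ) * Real.sqrt 2)⁻¹ * (n:ℝ) = (Real.sqrt 2)⁻¹ := by
      field_simp
    rw [hmul]
  set s : ℕ → ℝ := fun n => Real.sqrt (4*(d:ℝ)*1^2 + 2*(2*(n:ℝ))^2) with hs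
  have hshift : ∀ n : ℕ, shiftP P (ξ n) = P + (((2*(n:ℝ)) : ℝ) : ℂ) • L :=
    fun n => shift_eq d e0 e1 h0 h1 n
  have htz : ∀ n : ℕ, tildeZero (shiftP P (ξ n)) = s n := by
    intro n
    rw [hshift n]
    have hone : P + (((2*(n:ℝ)) : ℝ) : ℂ) • L
        = ((1:ℝ):ℂ) • (MvPolynomial.X e0 ^ 2 -
            ∑ i ∈ Finset.univ.filter (fun i : Fin d => (i : ℕ) ≠ 0), MvPolynomial.X i ^ 2)
          + (((2*(n:ℝ)) : ℝ) : ℂ) • (MvPolynomial.X e0 - MvPolynomial.X e1) := by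
      rw [Complex.ofReal_one, one_smul]
    rw [hone, key d e0 e1 h0 h1 1 (2*(n:ℝ))]
  set u : ℕ → ℝ := fun n => (s n)⁻¹ with hu
  set v : ℕ → ℝ := fun n => 2*(n:ℝ)*(s n)⁻¹ - c with hv
  have hdiff : ∀ n : ℕ, normShift P (ξ n) - Q
      = ((u n : ℝ) : ℂ) • P + ((v n : ℝ) : ℂ) • L := by
    intro n
    rw [normShift, htz n, hshift n, hQ, ← MvPolynomial.smul_eq_C_mul]
    simp only [hu, hv]
    push_cast
    module
  have hdiffval : ∀ n : ℕ, tildeZero (normShift P (ξ n) - Q)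
      = Real.sqrt (4*(d:ℝ)*(u n)^2 + 2*(v n)^2) := by
    intro n
    rw [hdiff n]
    exact key d e0 e1 h0 h1 (u n) (v n)
  have hd3 : (3:ℝ) ≤ (d:ℝ) := by exact_mod_cast hd
  have hstend : Tendsto s atTop atTop := by
    apply Filter.tendsto_atTop_mono _ (tendsto_natCast_atTop_atTop (R := ℝ))
    intro n
    have h1' : (n:ℝ) = Real.sqrt ((n:ℝ)^2) := (Real.sqrt_sq (Nat.cast_nonneg n)).symm
    rw [h1']
    apply Real.sqrt_le_sqrt
    nlinarith [sq_nonneg (n:ℝ)]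
  have hutend : Tendsto u atTop (nhds 0) := hstend.inv_tendsto_atTop
  have hvtend : Tendsto v atTop (nhds 0) := by
    have hq : Tendsto (fun n : ℕ => 2*(n:ℝ)*(s n)⁻¹) atTop (nhds c) := by
      have hsq : Tendsto (fun n : ℕ => ((n:ℝ)^2)⁻¹) atTop (nhds 0) := by
        apply Filter.Tendsto.inv_tendsto_atTop
        exact (Filter.tendsto_pow_atTop two_ne_zero).comp (tendsto_natCast_atTop_atTop (R := ℝ))
      have hden : Tendsto (fun n : ℕ => 4*(d:ℝ)*((n:ℝ)^2)⁻¹ + 8) atTop (nhds 8) := by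
        have := (hsq.const_mul (4*(d:ℝ))).add_const (8:ℝ)
        simpa using this
      have hdiv : Tendsto (fun n : ℕ => 4 / (4*(d:ℝ)*((n:ℝ)^2)⁻¹ + 8)) atTop (nhds (4/8)) :=
        tendsto_const_nhds.div hden (by norm_num)
      have hrat : Tendsto (fun n : ℕ =>
          4*(n:ℝ)^2 / (4*(d:ℝ)*1^2 + 2*(2*(n:ℝ))^2)) atTop (nhds (1/2)) := by
        rw [show (1:ℝ)/2 = 4/8 by norm_num]
        apply Tendsto.congr' _ hdiv
        filter_upwards [Filter.eventually_ge_atTop 1] with n hn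
        have hn0 : (n:ℝ) ≠ 0 := by positivity
        field_simp
        ring
      have hcomp := (Real.continuous_sqrt.tendsto ((1:ℝ)/2)).comp hrat
      have heq : ∀ n : ℕ, Real.sqrt (4*(n:ℝ)^2 / (4*(d:ℝ)*1^2 + 2*(2*(n:ℝ))^2))
          = 2*(n:ℝ)*(s n)⁻¹ := by
        intro n
        rw [Real.sqrt_div (by positivity)]
        have h4 : (4:ℝ)*(n:ℝ)^2 = (2*(n:ℝ))^2 := by ring
        rw [h4, Real.sqrt_sq (by positivity)]
        rw [div_eq_mul_inv]
      have hfin : Real.sqrt ((1:ℝ)/2) = c := by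
        rw [hc, one_div, Real.sqrt_inv]
      rw [← hfin]
      exact hcomp.congr heq
    have := hq.sub_const c
    rw [sub_self] at this
    exact this
  have htend3 : Tendsto (fun n => tildeZero (normShift P (ξ n) - Q)) atTop (nhds 0) := by
    simp only [hdiffval]
    have harg : Tendsto (fun n => 4*(d:ℝ)*(u n)^2 + 2*(v n)^2) atTop (nhds 0) := by
      have ha := ((hutend.mul hutend).const_mul (4*(d:ℝ))).add
        ((hvtend.mul hvtend).const_mul (2:ℝ))
      have hzero : (4*(d:ℝ)*(0*0) + 2*(0*0) : ℝ) = 0 := by ring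
      rw [hzero] at ha
      apply ha.congr
      intro n
      ring
    have hsq := (Real.continuous_sqrt.tendsto 0).comp harg
    rw [Real.sqrt_zero] at hsq
    exact hsq
  have hmem : Q ∈ LNset P N := ⟨ξ, htend1, htend2, htend3⟩
  constructor
  · exact ⟨(c:ℂ), Complex.ofReal_ne_zero.mpr hc0, hmem⟩
  · refine ⟨Q, hmem, ?_⟩
    intro a hQa
    have hq1 : MvPolynomial.coeff (Finsupp.single e0 1) Q = (c:ℂ) := by
      simp [hQ, hL, MvPolynomial.coeff_C_mul, MvPolynomial.coeff_X',
        Finsupp.single_eq_single_iff, hne, hne.symm]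
    have hq2 : MvPolynomial.coeff (Finsupp.single e0 1) (MvPolynomial.C a : MvPolynomial (Fin d) ℂ) = 0 := by
      rw [MvPolynomial.coeff_C, if_neg]
      intro h
      have := DFunLike.congr_fun h e0
      simp [Finsupp.single_apply] at this
    rw [hQa, hq2] at hq1
    exact hc0 (by exact_mod_cast hq1.symm)


end
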